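/- Let θ be a continuous binary substitution of constant length r with one-sided fixed point ω and I = {m : θ(0)_m = 1}. Let j = min I and p = jr + j. Then for every nonempty finite set F ⊆ ℕ, writing ρ = Σ_{m∈F} p·r^{2m}, we have ω_ρ = 0 and ω_{ρ−1} = 1. -/

import Mathlib

open Set Topology

/-! ### Ellis semigroup of a dynamical system -/

section Ellis

variable {X : Type*} [TopologicalSpace X]

/-- The Ellis (enveloping) semigroup of a dynamical system `(X, T)`: the closure of
`{T^n : n ∈ ℤ}` in `X → X` with the topology of pointwise convergence. -/
def ellisSemigroup (T : X ≃ₜ X) : Set (X → X) :=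
  closure {f : X → X | ∃ n : ℤ, f = ⇑(T.toEquiv ^ n)}

/-- A (left) ideal of the Ellis semigroup. -/
def IsLeftIdealOf (T : X ≃ₜ X) (I : Set (X → X)) : Prop :=
  I.Nonempty ∧ I ⊆ ellisSemigroup T ∧ ∀ p ∈ ellisSemigroup T, ∀ q ∈ I, p ∘ q ∈ I

/-- A minimal left ideal of the Ellis semigroup. -/
def IsMinimalLeftIdealOf (T : X ≃ₜ X) (I : Set (X → X)) : Prop :=
  IsLeftIdealOf T I ∧ ∀ J, IsLeftIdealOf T J → J ⊆ I → J = I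

/-- Two points are proximal iff some element of the Ellis semigroup identifies them. -/
def ProximalIn (T : X ≃ₜ X) (x y : X) : Prop :=
  ∃ p ∈ ellisSemigroup T, p x = p y

end Ellis

/-! ### The shift on bi-infinite sequences and orbit closures -/

section Shift

variable {A : Type*}

/-- The shift map on bi-infinite sequences. -/
def shiftF (A : Type*) : (ℤ → A) → (ℤ → A) := fun x n => x (n + 1)

/-- The inverse shift map on bi-infinite sequences. -/
def shiftFInv (A : Type*) : (ℤ → A) → (ℤ → A) := fun x n => x (n - 1)

variable [TopologicalSpace A]

/-- The shift-orbit closure of a bi-infinite sequence. -/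
def orbitClosure (x : ℤ → A) : Set (ℤ → A) :=
  closure {y | ∃ n : ℤ, y = fun k => x (k + n)}

lemma self_mem_orbitClosure (x : ℤ → A) : x ∈ orbitClosure x :=
  subset_closure ⟨0, by funext k; simp⟩

lemma shiftF_mem_orbitClosure (x : ℤ → A) {y : ℤ → A} (hy : y ∈ orbitClosure x) :
    shiftF A y ∈ orbitClosure x := by
  have hc : Continuous (shiftF A) := continuous_pi fun n => continuous_apply (n + 1)
  have h1 := image_closure_subset_closure_image
    (s := {y : ℤ → A | ∃ n : ℤ, y = fun k => x (k + n)}) hc (mem_image_of_mem _ hy)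
  refine closure_mono ?_ h1
  rintro _ ⟨z, ⟨n, rfl⟩, rfl⟩
  refine ⟨n + 1, ?_⟩
  funext k
  show x (k + 1 + n) = x (k + (n + 1))
  congr 1; ring

lemma shiftFInv_mem_orbitClosure (x : ℤ → A) {y : ℤ → A} (hy : y ∈ orbitClosure x) :
    shiftFInv A y ∈ orbitClosure x := by
  have hc : Continuous (shiftFInv A) := continuous_pi fun n => continuous_apply (n - 1)
  have h1 := image_closure_subset_closure_image
    (s := {y : ℤ → A | ∃ n : ℤ, y = fun k => x (k + n)}) hc (mem_image_of_mem _ hy)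
  refine closure_mono ?_ h1
  rintro _ ⟨z, ⟨n, rfl⟩, rfl⟩
  refine ⟨n - 1, ?_⟩
  funext k
  show x (k - 1 + n) = x (k + (n - 1))
  congr 1; ring

/-- The shift, as a homeomorphism of the orbit closure of `x`. -/
def shiftHomOn (x : ℤ → A) : (orbitClosure x) ≃ₜ (orbitClosure x) where
  toFun y := ⟨shiftF A y.1, shiftF_mem_orbitClosure x y.2⟩
  invFun y := ⟨shiftFInv A y.1, shiftFInv_mem_orbitClosure x y.2⟩
  left_inv y := by
    apply Subtype.ext; funext k
    show y.1 (k - 1 + 1) = y.1 k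
    congr 1; ring
  right_inv y := by
    apply Subtype.ext; funext k
    show y.1 (k + 1 - 1) = y.1 k
    congr 1; ring
  continuous_toFun := Continuous.subtype_mk
    ((continuous_pi fun n => continuous_apply (n + 1)).comp continuous_subtype_val) _
  continuous_invFun := Continuous.subtype_mk
    ((continuous_pi fun n => continuous_apply (n - 1)).comp continuous_subtype_val) _

/-- The set of legal two-letter words of a subshift `Xs`. -/
def legalPairs (Xs : Set (ℤ → A)) : Set (A × A) :=
  {ab | ∃ y ∈ Xs, ∃ i : ℤ, y i = ab.1 ∧ y (i + 1) = ab.2}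

end Shift

/-! ### Substitutions of constant length -/

section Subst

variable {na r : ℕ} [NeZero na] [NeZero r]

/-- `wordIter θ k a j` is the `j`-th letter of the word `θ^k(a)` (of length `r^k`). -/
def wordIter (θ : Fin na → Fin r → Fin na) : ℕ → Fin na → ℕ → Fin na
  | 0, a, _ => a
  | k+1, a, j => wordIter θ k (θ a ⟨(j / r ^ k) % r, Nat.mod_lt _ (NeZero.pos r)⟩) (j % r ^ k)

/-- A bi-infinite fixed point of the substitution `θ`. -/
def IsSubFix (θ : Fin na → Fin r → Fin na) (x : ℤ → Fin na) : Prop :=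
  ∀ (n : ℤ) (m : Fin r), x (r * n + (m : ℕ)) = θ (x n) m

/-- `θ` is admissible: injective on letters and with non-periodic fixed points. -/
def AdmissibleSub (θ : Fin na → Fin r → Fin na) : Prop :=
  Function.Injective θ ∧
  ∀ x : ℤ → Fin na, IsSubFix θ x → ∀ p : ℤ, p ≠ 0 → ∃ k : ℤ, x (k + p) ≠ x k

/-- `θ` is primitive: some power of `θ` maps any letter to a word containing all letters. -/
def PrimitiveSub (θ : Fin na → Fin r → Fin na) : Prop :=
  ∃ k : ℕ, ∀ a b : Fin na, ∃ j < r ^ k, wordIter θ k a j = b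

/-- `θ` is coincidence-free. -/
def CoincidenceFreeSub (θ : Fin na → Fin r → Fin na) : Prop :=
  ∀ a b : Fin na, a ≠ b → ∀ m : Fin r, θ a m ≠ θ b m

/-- `θ` is in canonical form: `θ(a)` begins and ends with `a`. -/
def CanonicalFormSub (θ : Fin na → Fin r → Fin na) : Prop :=
  ∀ a, θ a ⟨0, NeZero.pos r⟩ = a ∧ θ a ⟨r - 1, Nat.sub_lt (NeZero.pos r) one_pos⟩ = a

/-- `HeightData θ xh d m` : `xh` is a bi-infinite fixed point of `θ` with `xh 0 = 0`,
`d` is the gcd of the set `M = {n ≥ 1 : xh n = 0}` of positive occurrences of `0`,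
and `m` is the height `m(θ)`: the largest divisor of `d` coprime to `r`. -/
def HeightData (θ : Fin na → Fin r → Fin na) (xh : ℤ → Fin na) (d m : ℕ) : Prop :=
  IsSubFix θ xh ∧ xh 0 = 0 ∧
  (∀ k : ℕ, 1 ≤ k → xh (k : ℤ) = 0 → d ∣ k) ∧
  (∀ e : ℕ, (∀ k : ℕ, 1 ≤ k → xh (k : ℤ) = 0 → e ∣ k) → e ∣ d) ∧
  0 < m ∧ m ∣ d ∧ Nat.Coprime m r ∧
  ∀ m' : ℕ, m' ∣ d → Nat.Coprime m' r → m' ∣ m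

/-- `z(i) = (min {n : θ(i)_n = 0}) mod m`. -/
noncomputable def subZ (θ : Fin na → Fin r → Fin na) (m : ℕ) (i : Fin na) : ℕ :=
  sInf {n : ℕ | ∃ h : n < r, θ i ⟨n, h⟩ = 0} % m

/-- The class `S_p = {i : z(i) ≡ -p (mod m)}`. -/
def subS (θ : Fin na → Fin r → Fin na) (m : ℕ) (p : ℕ) : Set (Fin na) :=
  {i | Int.ModEq (m : ℤ) (subZ θ m i : ℤ) (-(p : ℤ))}

/-- The set `P(i,j,k) = {θ^k(p)[j, j+1] : p ∈ S_i}`. -/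
def subP (θ : Fin na → Fin r → Fin na) (m : ℕ) (i j k : ℕ) : Set (Fin na × Fin na) :=
  {ab | ∃ p ∈ subS θ m i, ab = (wordIter θ k p j, wordIter θ k p (j + 1))}

/-- The collection of all classes `P(i,j,k)` for `i < m(θ)`, `k ≥ 1`, `0 ≤ j ≤ r^k - 2`. -/
def subClasses (θ : Fin na → Fin r → Fin na) (m : ℕ) : Set (Set (Fin na × Fin na)) :=
  {P | ∃ i < m, ∃ k, 1 ≤ k ∧ ∃ j, j + 2 ≤ r ^ k ∧ P = subP θ m i j k}

/-- Condition (A): the collection of the `P(i,j,k)` is a partition of the set of legal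
two-letter words. -/
def subCondA (θ : Fin na → Fin r → Fin na) (m : ℕ) (Xs : Set (ℤ → Fin na)) : Prop :=
  (∀ C ∈ subClasses θ m, C.Nonempty) ∧
  (⋃₀ subClasses θ m = legalPairs Xs) ∧
  ∀ C ∈ subClasses θ m, ∀ D ∈ subClasses θ m, C = D ∨ Disjoint C D

/-- Data of the quotient substitution `φ` on the alphabet `B = Fin n` of classes:
`c` is the labelling of legal two-letter words by their classes (with the class of words
whose last letter lies in `S_0` labelled `0`), and `φ(b)_0 = b`,
`φ(b)_h = [θ(a_b)[h-1,h]]` for `1 ≤ h ≤ r-1`, where `a_b` is any last letter of a word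
in class `b`. -/
def QuotientSubData {n : ℕ} [NeZero n] (θ : Fin na → Fin r → Fin na) (m : ℕ)
    (Xs : Set (ℤ → Fin na)) (c : Fin na × Fin na → Fin n)
    (φ : Fin n → Fin r → Fin n) : Prop :=
  (∀ b : Fin n, ∃ ab ∈ legalPairs Xs, c ab = b) ∧
  (∀ ab ∈ legalPairs Xs, ∀ cd ∈ legalPairs Xs,
    (c ab = c cd ↔ ∃ C ∈ subClasses θ m, ab ∈ C ∧ cd ∈ C)) ∧
  (∀ ab ∈ legalPairs Xs, c ab = ⟨0, NeZero.pos n⟩ → ab.2 ∈ subS θ m 0) ∧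
  (∀ b : Fin n, φ b ⟨0, NeZero.pos r⟩ = b) ∧
  ∀ b : Fin n, ∀ ab ∈ legalPairs Xs, c ab = b →
    ∀ (h : ℕ) (_ : 1 ≤ h) (hh : h < r),
      φ b ⟨h, hh⟩ = c (θ ab.2 ⟨h - 1, lt_of_le_of_lt (Nat.sub_le h 1) hh⟩, θ ab.2 ⟨h, hh⟩)

/-- The `i`-th column set `C_i = {φ(b)_i : b ∈ B}` of a substitution `φ`. -/
def colSet {n : ℕ} (φ : Fin n → Fin r → Fin n) (i : ℕ) (hi : i < r) : Set (Fin n) :=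
  {b' | ∃ b, φ b ⟨i, hi⟩ = b'}

/-- The number `q` of distinct column sets `C_1, …, C_{r-1}` of `φ`. -/
noncomputable def numColSets {n : ℕ} (φ : Fin n → Fin r → Fin n) : ℕ :=
  {C : Set (Fin n) | ∃ i, ∃ hi : i < r, 1 ≤ i ∧ C = colSet φ i hi}.ncard

/-- The 2-block sliding block code induced by a block map `c`. -/
def PsiMap {A B : Type*} (c : A × A → B) (x : ℤ → A) : ℤ → B :=
  fun i => c (x (i - 1), x i)

end Subst

/-! ### IP sets and IP cluster points -/

/-- A subset of `ℤ` is an IP set if it is the set of finite sums of a sequence of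
distinct integers. -/
def IsIPSet (Q : Set ℤ) : Prop :=
  ∃ g : ℕ → ℤ, Function.Injective g ∧
    Q = {s | ∃ F : Finset ℕ, F.Nonempty ∧ s = ∑ i ∈ F, g i}

/-- `f` is an IP cluster point of the system `(X,T)` along the IP set `P`. -/
def IsIPCP {X : Type*} [TopologicalSpace X] (T : X ≃ₜ X) (f : X → X) (P : Set ℤ) : Prop :=
  ∀ U ∈ nhds f, ∃ Q : Set ℤ, IsIPSet Q ∧ Q ⊆ {k ∈ P | ⇑(T.toEquiv ^ k) ∈ U}

set_option maxHeartbeats 1600000 in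
/-- For a continuous binary substitution with one-sided fixed point `ω`,
`I = {m : θ(0)_m = 1}`, `j = min I` and `p = jr + j`: for every nonempty finite `F ⊆ ℕ`,
with `ρ = Σ_{m ∈ F} p·r^{2m}`, one has `ω_ρ = 0` and `ω_{ρ-1} = 1`. -/
theorem stmt_15 {r : ℕ} [NeZero r] (hr : 2 ≤ r)
    (θ : Fin 2 → Fin r → Fin 2)
    (hθ00 : θ 0 ⟨0, NeZero.pos r⟩ = 0)
    (hcompl : ∀ m : Fin r, θ 1 m = θ 0 m + 1)
    (hdist : θ 0 ≠ θ 1)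
    (ω : ℕ → Fin 2)
    (hω0 : ω 0 = 0)
    (hωrec : ∀ (n : ℕ) (m : Fin r), ω (r * n + (m : ℕ)) = ω n + θ 0 m)
    (hnp : ∀ p : ℕ, 1 ≤ p → ∃ k : ℕ, ω (k + p) ≠ ω k)
    (hIne : {m : ℕ | ∃ hm : m < r, θ 0 ⟨m, hm⟩ = 1}.Nonempty)
    (j p : ℕ)
    (hj : j = sInf {m : ℕ | ∃ hm : m < r, θ 0 ⟨m, hm⟩ = 1})
    (hp : p = j * r + j) :
    ∀ F : Finset ℕ, F.Nonempty →
      ω (∑ m ∈ F, p * r ^ (2 * m)) = 0 ∧ ω ((∑ m ∈ F, p * r ^ (2 * m)) - 1) = 1 := by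
  have hr0 : 0 < r := NeZero.pos r
  have fin2 : ∀ x : Fin 2, x = 0 ∨ x = 1 := by decide
  obtain ⟨hjr, haj⟩ : ∃ hjr : j < r, θ 0 ⟨j, hjr⟩ = 1 := hj ▸ Nat.sInf_mem hIne
  have hj1 : 1 ≤ j := by
    rcases Nat.eq_zero_or_pos j with h0 | h
    · exfalso
      subst h0
      have : θ 0 ⟨0, NeZero.pos r⟩ = 1 := haj
      rw [hθ00] at this
      exact absurd this (by decide)
    · exact h
  have haj1 : θ 0 ⟨j - 1, by omega⟩ = 0 := by
    have hne : ¬ (j - 1) ∈ {m : ℕ | ∃ hm : m < r, θ 0 ⟨m, hm⟩ = 1} := by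
      apply Nat.notMem_of_lt_sInf
      omega
    rcases fin2 (θ 0 ⟨j - 1, by omega⟩) with h | h
    · exact h
    · exact absurd ⟨by omega, h⟩ hne
  -- basic values of ω
  have hωj : ω j = 1 := by
    have h : ω (r * 0 + j) = ω 0 + θ 0 ⟨j, hjr⟩ := hωrec 0 ⟨j, hjr⟩
    rw [mul_zero, zero_add, hω0, haj, zero_add] at h
    exact h
  have hωp : ω p = 0 := by
    have h : ω (r * j + j) = ω j + θ 0 ⟨j, hjr⟩ := hωrec j ⟨j, hjr⟩
    rw [hωj, haj] at h
    rw [show p = r * j + j by rw [hp, mul_comm], h]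
    decide
  have hωpm1 : ω (p - 1) = 1 := by
    have h : ω (r * j + (j - 1)) = ω j + θ 0 ⟨j - 1, by omega⟩ := hωrec j ⟨j - 1, by omega⟩
    rw [hωj, haj1, add_zero] at h
    have hc : j * r = r * j := mul_comm j r
    rw [show p - 1 = r * j + (j - 1) by omega, h]
  -- Lemma D : digit splitting
  have lemD : ∀ k n t : ℕ, n < r ^ k → ω (n + r ^ k * t) = ω n + ω t := by
    intro k
    induction k with
    | zero =>
      intro n t hn
      rw [pow_zero] at hn ⊢
      have : n = 0 := by omega
      subst this
      rw [hω0, one_mul, zero_add, zero_add]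
    | succ k IH =>
      intro n t hn
      have hmod : n % r < r := Nat.mod_lt _ hr0
      have hdiv : n / r < r ^ k := by
        apply (Nat.div_lt_iff_lt_mul hr0).mpr
        rw [pow_succ] at hn
        exact hn
      have e1 : n + r ^ (k + 1) * t = r * (n / r + r ^ k * t) + n % r := by
        have h1 : r * (n / r) + n % r = n := Nat.div_add_mod n r
        have h2 : r * (r ^ k * t) = r ^ (k + 1) * t := by ring
        rw [mul_add]
        omega
      have e2 : ω (r * (n / r) + n % r) = ω (n / r) + θ 0 ⟨n % r, hmod⟩ :=
        hωrec (n / r) ⟨n % r, hmod⟩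
      have e3 : ω (r * (n / r + r ^ k * t) + n % r)
          = ω (n / r + r ^ k * t) + θ 0 ⟨n % r, hmod⟩ :=
        hωrec (n / r + r ^ k * t) ⟨n % r, hmod⟩
      have e4 : ω n = ω (n / r) + θ 0 ⟨n % r, hmod⟩ := by
        conv_lhs => rw [← Nat.div_add_mod n r]
        exact e2
      rw [e1, e3, IH _ _ hdiv, e4]
      exact add_right_comm _ _ _
  have lemB : ∀ k t : ℕ, ω (r ^ k * t) = ω t := by
    intro k t
    have := lemD k 0 t (pow_pos hr0 k)
    rwa [zero_add, hω0, zero_add] at this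
  -- Lemma E : ω (p * r ^ (2k) - 1) = 1
  have hppos : 1 ≤ p := by omega
  have step : ∀ n : ℕ, 1 ≤ n →
      ω (r * n - 1) = ω (n - 1) + θ 0 ⟨r - 1, by omega⟩ := by
    intro n hn
    have h : ω (r * (n - 1) + (r - 1)) = ω (n - 1) + θ 0 ⟨r - 1, by omega⟩ :=
      hωrec (n - 1) ⟨r - 1, by omega⟩
    have h2 : r * n = r * (n - 1) + r := by
      rw [← Nat.mul_succ]
      congr 1
      omega
    rw [show r * n - 1 = r * (n - 1) + (r - 1) by omega, h]
  have lemE : ∀ k : ℕ, ω (p * r ^ (2 * k) - 1) = 1 := by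
    intro k
    induction k with
    | zero => simpa using hωpm1
    | succ k IH =>
      have hpos : 1 ≤ p * r ^ (2 * k) := Nat.one_le_iff_ne_zero.mpr
        (Nat.mul_ne_zero (by omega) (Nat.pos_iff_ne_zero.mp (pow_pos hr0 _)))
      have hpos2 : 1 ≤ r * (p * r ^ (2 * k)) :=
        le_trans hpos (Nat.le_mul_of_pos_left _ hr0)
      have e : p * r ^ (2 * (k + 1)) = r * (r * (p * r ^ (2 * k))) := by ring
      rw [e, step _ hpos2, step _ hpos, IH]
      rcases fin2 (θ 0 ⟨r - 1, by omega⟩) with h | h <;> rw [h] <;> decide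
  -- bound
  have hplt : ∀ k : ℕ, p * r ^ (2 * k) < r ^ (2 * k + 2) := by
    intro k
    have hp2 : p < r ^ 2 := by nlinarith [hjr]
    calc p * r ^ (2 * k) < r ^ 2 * r ^ (2 * k) :=
          Nat.mul_lt_mul_of_lt_of_le hp2 le_rfl (pow_pos hr0 _)
      _ = r ^ (2 * k + 2) := by ring
  -- decomposition of a nonempty sum
  have decomp : ∀ S : Finset ℕ, S.Nonempty → ∃ m0 : ℕ, ∃ S' : Finset ℕ,
      S'.card < S.card ∧
      ∑ m ∈ S, p * r ^ (2 * m)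
        = p * r ^ (2 * m0) + r ^ (2 * m0 + 2) * ∑ m' ∈ S', p * r ^ (2 * m') := by
    intro S hne
    set m0 := S.min' hne with hm0def
    have hm0 : m0 ∈ S := S.min'_mem hne
    set T := S.erase m0 with hT
    have hTm : ∀ m ∈ T, m0 + 1 ≤ m := by
      intro m hm
      have h1 := S.min'_le m (Finset.mem_of_mem_erase hm)
      have h2 := Finset.ne_of_mem_erase hm
      omega
    set S' := T.image (fun m => m - (m0 + 1)) with hS'
    refine ⟨m0, S', ?_, ?_⟩
    · calc S'.card ≤ T.card := Finset.card_image_le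
        _ < S.card := by
            rw [hT, Finset.card_erase_of_mem hm0]
            have := Finset.card_pos.mpr hne
            omega
    · rw [← Finset.add_sum_erase S _ hm0]
      congr 1
      rw [hS', Finset.mul_sum, Finset.sum_image (by
        intro x hx y hy hxy
        have := hTm x hx
        have := hTm y hy
        have hxy' : x - (m0 + 1) = y - (m0 + 1) := hxy
        omega)]
      apply Finset.sum_congr rfl
      intro m hm
      have h := hTm m hm
      rw [show 2 * m = (2 * m0 + 2) + 2 * (m - (m0 + 1)) by omega, pow_add]
      ring
  -- the sum is always sent to 0
  have lemF : ∀ n : ℕ, ∀ S : Finset ℕ, S.card ≤ n →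
      ω (∑ m ∈ S, p * r ^ (2 * m)) = 0 := by
    intro n
    induction n with
    | zero =>
      intro S hS
      have : S = ∅ := Finset.card_eq_zero.mp (by omega)
      rw [this, Finset.sum_empty, hω0]
    | succ n IH =>
      intro S hS
      rcases S.eq_empty_or_nonempty with rfl | hne
      · rw [Finset.sum_empty, hω0]
      · obtain ⟨m0, S', hcard, hsum⟩ := decomp S hne
        rw [hsum, lemD _ _ _ (hplt m0), IH S' (by omega), add_zero,
          mul_comm p, lemB, hωp]
  intro F hne
  obtain ⟨m0, S', hcard, hsum⟩ := decomp F hne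
  have hS'0 : ω (∑ m' ∈ S', p * r ^ (2 * m')) = 0 := lemF S'.card S' le_rfl
  constructor
  · rw [hsum, lemD _ _ _ (hplt m0), hS'0, add_zero, mul_comm p, lemB, hωp]
  · have hA : 1 ≤ p * r ^ (2 * m0) := Nat.one_le_iff_ne_zero.mpr
      (Nat.mul_ne_zero (by omega) (Nat.pos_iff_ne_zero.mp (pow_pos hr0 _)))
    have e : (∑ m ∈ F, p * r ^ (2 * m)) - 1
        = (p * r ^ (2 * m0) - 1) + r ^ (2 * m0 + 2) * ∑ m' ∈ S', p * r ^ (2 * m') := by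
      rw [hsum]
      omega
    have hlt : p * r ^ (2 * m0) - 1 < r ^ (2 * m0 + 2) := by
      have := hplt m0
      omega
    rw [e, lemD _ _ _ hlt, hS'0, add_zero, lemE]
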